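/- If a differentiable function V : ℝ → ℝ and a function z : ℝ → ℝ^k satisfy λ₁‖z(t)‖² ≤ V(t) ≤ λ₂‖z(t)‖² and V'(t) ≤ -λ₃‖z(t)‖² for positive constants λ₁ ≤ λ₂ and λ₃ > 0, then ‖z(t)‖ ≤ √(λ₂/λ₁) ‖z(0)‖ exp(-(λ₃/(2λ₂)) t) for all t ≥ 0. -/

import Mathlib

theorem exponential_convergence {k : ℕ}
    (lam1 lam2 lam3 : ℝ) (h1 : 0 < lam1) (h2 : lam1 ≤ lam2) (h3 : 0 < lam3)
    (V : ℝ → ℝ) (z : ℝ → EuclideanSpace ℝ (Fin k))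
    (hV : Differentiable ℝ V)
    (hlow : ∀ t ≥ 0, lam1 * ‖z t‖ ^ 2 ≤ V t)
    (hup : ∀ t ≥ 0, V t ≤ lam2 * ‖z t‖ ^ 2)
    (hder : ∀ t ≥ 0, deriv V t ≤ -lam3 * ‖z t‖ ^ 2) :
    ∀ t ≥ 0, ‖z t‖ ≤ Real.sqrt (lam2 / lam1) * ‖z 0‖ * Real.exp (-(lam3 / (2 * lam2)) * t) := by
  have hlam2 : 0 < lam2 := lt_of_lt_of_le h1 h2
  set c : ℝ := lam3 / lam2 with hc
  have hcpos : 0 < c := div_pos h3 hlam2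
  set g : ℝ → ℝ := fun t => V t * Real.exp (c * t) with hg
  have hgderiv : ∀ t, HasDerivAt g (deriv V t * Real.exp (c * t) + V t * (c * Real.exp (c * t))) t := by
    intro t
    have h1' : HasDerivAt V (deriv V t) t := (hV t).hasDerivAt
    have h2' : HasDerivAt (fun t => Real.exp (c * t)) (c * Real.exp (c * t)) t := by
      have := ((hasDerivAt_id t).const_mul c).exp
      simpa [mul_comm] using this
    exact h1'.mul h2'
  have hanti : AntitoneOn g (Set.Ici (0:ℝ)) := by
    apply antitoneOn_of_deriv_nonpos (convex_Ici 0)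
    · exact Continuous.continuousOn (by
        exact (hV.continuous.mul ((Real.continuous_exp.comp (continuous_const.mul continuous_id)))))
    · intro t ht
      exact (hgderiv t).differentiableAt.differentiableWithinAt
    · intro t ht
      rw [interior_Ici] at ht
      have ht0 : (0:ℝ) ≤ t := le_of_lt ht
      rw [(hgderiv t).deriv]
      have hVz : V t ≤ lam2 * ‖z t‖ ^ 2 := hup t ht0
      have hdV : deriv V t ≤ -lam3 * ‖z t‖ ^ 2 := hder t ht0
      have hexp : 0 < Real.exp (c * t) := Real.exp_pos _
      have key : deriv V t + V t * c ≤ 0 := by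
        have : V t * c ≤ lam2 * ‖z t‖ ^ 2 * (lam3 / lam2) := by
          apply mul_le_mul_of_nonneg_right hVz (le_of_lt hcpos)
        have heq : lam2 * ‖z t‖ ^ 2 * (lam3 / lam2) = lam3 * ‖z t‖ ^ 2 := by
          field_simp
        nlinarith
      nlinarith
  intro t ht
  have hgle : g t ≤ g 0 := hanti Set.self_mem_Ici ht ht
  have hVt : V t * Real.exp (c * t) ≤ V 0 := by simpa [hg] using hgle
  have hexp : 0 < Real.exp (c * t) := Real.exp_pos _
  have hV0 : V 0 ≤ lam2 * ‖z 0‖ ^ 2 := hup 0 le_rfl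
  have hVtl : lam1 * ‖z t‖ ^ 2 ≤ V t := hlow t ht
  -- ‖z t‖^2 ≤ (lam2/lam1) * ‖z 0‖^2 * exp (-c t)
  have hsq : ‖z t‖ ^ 2 ≤ (lam2 / lam1) * ‖z 0‖ ^ 2 * Real.exp (-(c * t)) := by
    have heq : (lam2 / lam1) * ‖z 0‖ ^ 2 * Real.exp (-(c * t))
        = (lam2 * ‖z 0‖ ^ 2) / (lam1 * Real.exp (c * t)) := by
      rw [Real.exp_neg]; field_simp
    rw [heq, le_div_iff₀ (by positivity)]
    nlinarith
  -- RHS of goal squared equals that bound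
  have hR : (Real.sqrt (lam2 / lam1) * ‖z 0‖ * Real.exp (-(lam3 / (2 * lam2)) * t)) ^ 2
      = (lam2 / lam1) * ‖z 0‖ ^ 2 * Real.exp (-(c * t)) := by
    have hs : Real.sqrt (lam2 / lam1) ^ 2 = lam2 / lam1 :=
      Real.sq_sqrt (le_of_lt (div_pos hlam2 h1))
    have he : Real.exp (-(lam3 / (2 * lam2)) * t) ^ 2 = Real.exp (-(c * t)) := by
      rw [← Real.exp_nat_mul]
      congr 1
      rw [hc]; ring
    rw [mul_pow, mul_pow, hs, he]
  have hRnn : 0 ≤ Real.sqrt (lam2 / lam1) * ‖z 0‖ * Real.exp (-(lam3 / (2 * lam2)) * t) := by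
    positivity
  nlinarith [norm_nonneg (z t), sq_nonneg (‖z t‖ - Real.sqrt (lam2 / lam1) * ‖z 0‖ * Real.exp (-(lam3 / (2 * lam2)) * t))]
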